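/- Let M be a matroid on U, and let f be normalized, monotone, submodular with curvature at most c ∈ (0,1]. Let A = {a_1,…,a_r} and B = {b_1,…,b_r} be two bases of M indexed via Brualdi's bijection so that A − a_i + b_i is a base for each i (and b_i = a_i whenever b_i ∈ A). Then (c e^c/(e^c−1)) f(A) ≥ f(B) + ∑_{i=1}^r [g(A) − g(A − a_i + b_i)], where g(S) = ∑_{T ⊆ S} m_{|S|−1,|T|−1} f(T). -/

import Mathlib

open MeasureTheory Real Finset

noncomputable def mcoef (c : ℝ) (a b : ℤ) : ℝ :=
  if a < 0 ∨ b < 0 then 0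
  else ∫ p in (0:ℝ)..1,
    (c * Real.exp (c * p) / (Real.exp c - 1)) * p ^ b.toNat * (1 - p) ^ (a - b).toNat

noncomputable def harm (k : ℕ) : ℝ := ∑ t ∈ Finset.range k, (1 : ℝ) / (t + 1)

noncomputable def gfun (c : ℝ) {U : Type*} [DecidableEq U] (f : Finset U → ℝ)
    (A : Finset U) : ℝ :=
  ∑ B ∈ A.powerset, mcoef c ((A.card : ℤ) - 1) ((B.card : ℤ) - 1) * f B


section Aux17
variable {U : Type*} [DecidableEq U]

lemma aux17_sum_w_one (p : ℝ) (s : Finset U) :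
    ∑ R ∈ s.powerset, p ^ R.card * (1 - p) ^ (s.card - R.card) = 1 := by
  induction s using Finset.induction_on with
  | empty => simp
  | insert x s hx ih =>
    have key : ∑ T ∈ s.powerset, (p ^ T.card * (1 - p) ^ ((insert x s).card - T.card)
        + p ^ (insert x T).card * (1 - p) ^ ((insert x s).card - (insert x T).card))
        = ∑ T ∈ s.powerset, p ^ T.card * (1 - p) ^ (s.card - T.card) := by
      apply Finset.sum_congr rfl
      intro T hT
      have hTs : T ⊆ s := Finset.mem_powerset.mp hT
      have hxT : x ∉ T := fun h => hx (hTs h)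
      have hcard : T.card ≤ s.card := Finset.card_le_card hTs
      rw [Finset.card_insert_of_notMem hx, Finset.card_insert_of_notMem hxT]
      have h1 : s.card + 1 - T.card = (s.card - T.card) + 1 := by omega
      have h2 : s.card + 1 - (T.card + 1) = s.card - T.card := by omega
      rw [h1, h2, pow_succ]
      ring
    rw [Finset.sum_powerset_insert hx, ← Finset.sum_add_distrib, key, ih]

lemma aux17_pascal (p : ℝ) (G : Finset U → ℝ) (t : Finset U) (x : U) (hx : x ∉ t) :
    ∑ R ∈ (insert x t).powerset,
      p ^ R.card * (1 - p) ^ (t.card + 1 - R.card) * G (R.erase x)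
    = ∑ T ∈ t.powerset, p ^ T.card * (1 - p) ^ (t.card - T.card) * G T := by
  rw [Finset.sum_powerset_insert hx, ← Finset.sum_add_distrib]
  apply Finset.sum_congr rfl
  intro T hT
  have hTs : T ⊆ t := Finset.mem_powerset.mp hT
  have hxT : x ∉ T := fun h => hx (hTs h)
  have hcard : T.card ≤ t.card := Finset.card_le_card hTs
  rw [Finset.erase_insert hxT, Finset.erase_eq_of_notMem hxT,
    Finset.card_insert_of_notMem hxT]
  have h1 : t.card + 1 - T.card = (t.card - T.card) + 1 := by omega
  have h2 : t.card + 1 - (T.card + 1) = t.card - T.card := by omega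
  rw [h1, h2, pow_succ]
  ring

lemma aux17_part1 (p : ℝ) (f : Finset U → ℝ) (t : Finset U) (x : U) (hx : x ∉ t) :
    ∑ S ∈ (insert x t).powerset,
      (if x ∈ S then p ^ (S.card - 1) * (1 - p) ^ (t.card + 1 - S.card) * f S else 0)
    = ∑ T ∈ t.powerset, p ^ T.card * (1 - p) ^ (t.card - T.card) * f (insert x T) := by
  rw [Finset.sum_powerset_insert hx]
  have h1 : ∑ T ∈ t.powerset,
      (if x ∈ T then p ^ (T.card - 1) * (1 - p) ^ (t.card + 1 - T.card) * f T else 0) = 0 := by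
    apply Finset.sum_eq_zero
    intro T hT
    have hxT : x ∉ T := fun h => hx ((Finset.mem_powerset.mp hT) h)
    rw [if_neg hxT]
  rw [h1, zero_add]
  apply Finset.sum_congr rfl
  intro T hT
  have hTs : T ⊆ t := Finset.mem_powerset.mp hT
  have hxT : x ∉ T := fun h => hx (hTs h)
  rw [if_pos (Finset.mem_insert_self x T), Finset.card_insert_of_notMem hxT]
  have e1 : T.card + 1 - 1 = T.card := by omega
  have e2 : t.card + 1 - (T.card + 1) = t.card - T.card := by omega
  rw [e1, e2]

lemma aux17_powerset_erase (s : Finset U) (x : U) :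
    (s.erase x).powerset = s.powerset.filter (fun T => x ∉ T) := by
  ext T
  simp [Finset.mem_powerset, Finset.subset_erase, Finset.mem_filter, and_comm]

lemma aux17_subadd (f : Finset U → ℝ) (hnorm : f ∅ = 0)
    (hsub : ∀ X Y : Finset U, f X + f Y ≥ f (X ∪ Y) + f (X ∩ Y)) :
    ∀ S : Finset U, f S ≤ ∑ x ∈ S, f {x} := by
  intro S
  induction S using Finset.induction_on with
  | empty => simp [hnorm]
  | insert y S hy ih =>
    rw [Finset.sum_insert hy]
    have h1 := hsub S {y}
    have hU : S ∪ {y} = insert y S := by ext z; simp [or_comm]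
    rw [hU, Finset.inter_singleton_of_notMem hy, hnorm] at h1
    linarith

lemma aux17_sub2 (f : Finset U → ℝ)
    (hsub : ∀ X Y : Finset U, f X + f Y ≥ f (X ∪ Y) + f (X ∩ Y)) (R : Finset U) :
    ∀ S : Finset U, f (R ∪ S) - f R ≤ ∑ y ∈ S, (f (insert y R) - f R) := by
  intro S
  induction S using Finset.induction_on with
  | empty => simp
  | insert y S hy ih =>
    rw [Finset.sum_insert hy]
    have h1 := hsub (R ∪ S) (insert y R)
    have hU : (R ∪ S) ∪ insert y R = R ∪ insert y S := by
      ext z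
      simp only [Finset.mem_union, Finset.mem_insert]
      tauto
    have hI : (R ∪ S) ∩ insert y R = R := by
      ext z
      simp only [Finset.mem_inter, Finset.mem_union, Finset.mem_insert]
      constructor
      · rintro ⟨ha, hb⟩
        rcases hb with hb | hb
        · subst hb
          rcases ha with ha | ha
          · exact ha
          · exact absurd ha hy
        · exact hb
      · intro hz; exact ⟨Or.inl hz, Or.inr hz⟩
    rw [hU, hI] at h1
    linarith

end Aux17

section Aux17b
variable {U : Type*} [DecidableEq U]

lemma aux17_star (c : ℝ) (hc1 : c ≤ 1) (f : Finset U → ℝ)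
    (hnorm : f ∅ = 0)
    (hsub : ∀ X Y : Finset U, f X + f Y ≥ f (X ∪ Y) + f (X ∩ Y))
    (hcurv : ∀ X Y : Finset U, Disjoint X Y → f (X ∪ Y) ≥ f X + (1 - c) * f Y)
    (r : ℕ) (a b : Fin r → U) (hbinj : Function.Injective b)
    (A B : Finset U) (hB : B = Finset.image b Finset.univ)
    (hfix : ∀ i : Fin r, b i ∈ A → b i = a i)
    (R : Finset U) (hRA : R ⊆ A) :
    f B ≤ c * f R + ∑ i : Fin r, (f (insert (b i) (R.erase (a i))) - f (R.erase (a i))) := by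
  classical
  have hterm : ∀ i ∈ (Finset.univ : Finset (Fin r)),
      (if b i ∈ R then (1 - c) * f {b i} else f (insert (b i) R) - f R)
      ≤ f (insert (b i) (R.erase (a i))) - f (R.erase (a i)) := by
    intro i _
    by_cases hbR : b i ∈ R
    · rw [if_pos hbR]
      have hba : b i = a i := hfix i (hRA hbR)
      have haR : a i ∈ R := hba ▸ hbR
      have hdisj : Disjoint (R.erase (a i)) {a i} := by
        simp [Finset.disjoint_singleton_right]
      have h := hcurv (R.erase (a i)) {a i} hdisj
      have hU : R.erase (a i) ∪ {a i} = R := by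
        ext z
        simp only [Finset.mem_union, Finset.mem_erase, Finset.mem_singleton]
        constructor
        · rintro (⟨_, hz⟩ | hz)
          · exact hz
          · exact hz ▸ haR
        · intro hz
          by_cases hzy : z = a i
          · exact Or.inr hzy
          · exact Or.inl ⟨hzy, hz⟩
      rw [hU] at h
      rw [hba, Finset.insert_erase haR]
      linarith
    · rw [if_neg hbR]
      have h1 := hsub (insert (b i) (R.erase (a i))) R
      have hU : insert (b i) (R.erase (a i)) ∪ R = insert (b i) R := by
        ext z
        simp only [Finset.mem_union, Finset.mem_insert, Finset.mem_erase]
        tauto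
      have hI : insert (b i) (R.erase (a i)) ∩ R = R.erase (a i) := by
        ext z
        simp only [Finset.mem_inter, Finset.mem_insert, Finset.mem_erase]
        constructor
        · rintro ⟨ha, hzR⟩
          rcases ha with ha | ha
          · exact absurd (ha ▸ hzR) hbR
          · exact ha
        · intro hz
          exact ⟨Or.inr hz, hz.2⟩
      rw [hU, hI] at h1
      linarith
  have hsum := Finset.sum_le_sum hterm
  rw [Finset.sum_ite] at hsum
  have himg1 : Finset.image b (Finset.univ.filter (fun i => b i ∈ R)) = R ∩ B := by
    ext z
    constructor
    · intro hz
      obtain ⟨i, hi, rfl⟩ := Finset.mem_image.mp hz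
      exact Finset.mem_inter.mpr ⟨(Finset.mem_filter.mp hi).2,
        hB ▸ Finset.mem_image_of_mem b (Finset.mem_univ i)⟩
    · intro hz
      obtain ⟨hzR, hzB⟩ := Finset.mem_inter.mp hz
      rw [hB] at hzB
      obtain ⟨i, -, rfl⟩ := Finset.mem_image.mp hzB
      exact Finset.mem_image_of_mem b (Finset.mem_filter.mpr ⟨Finset.mem_univ i, hzR⟩)
  have himg2 : Finset.image b (Finset.univ.filter (fun i => ¬ b i ∈ R)) = B \ R := by
    ext z
    constructor
    · intro hz
      obtain ⟨i, hi, rfl⟩ := Finset.mem_image.mp hz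
      exact Finset.mem_sdiff.mpr ⟨hB ▸ Finset.mem_image_of_mem b (Finset.mem_univ i),
        (Finset.mem_filter.mp hi).2⟩
    · intro hz
      obtain ⟨hzB, hzR⟩ := Finset.mem_sdiff.mp hz
      rw [hB] at hzB
      obtain ⟨i, -, rfl⟩ := Finset.mem_image.mp hzB
      exact Finset.mem_image_of_mem b (Finset.mem_filter.mpr ⟨Finset.mem_univ i, hzR⟩)
  have hinj : ∀ x ∈ Finset.univ.filter (fun i => b i ∈ R),
      ∀ y ∈ Finset.univ.filter (fun i => b i ∈ R), b x = b y → x = y :=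
    fun x _ y _ h => hbinj h
  have hinj2 : ∀ x ∈ Finset.univ.filter (fun i => ¬ b i ∈ R),
      ∀ y ∈ Finset.univ.filter (fun i => ¬ b i ∈ R), b x = b y → x = y :=
    fun x _ y _ h => hbinj h
  have hsum1 : ∑ i ∈ Finset.univ.filter (fun i => b i ∈ R), (1 - c) * f {b i}
      = ∑ x ∈ R ∩ B, (1 - c) * f {x} := by
    rw [← himg1, Finset.sum_image hinj]
  have hsum2 : ∑ i ∈ Finset.univ.filter (fun i => ¬ b i ∈ R), (f (insert (b i) R) - f R)
      = ∑ x ∈ B \ R, (f (insert x R) - f R) := by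
    rw [← himg2, Finset.sum_image hinj2]
  rw [hsum1, hsum2] at hsum
  have hfac : ∑ x ∈ R ∩ B, (1 - c) * f {x} = (1 - c) * ∑ x ∈ R ∩ B, f {x} :=
    (Finset.mul_sum _ _ _).symm
  rw [hfac] at hsum
  have h1c : (0:ℝ) ≤ 1 - c := by linarith
  have hsubadd := aux17_subadd f hnorm hsub (R ∩ B)
  have hm1 : (1 - c) * f (R ∩ B) ≤ (1 - c) * ∑ x ∈ R ∩ B, f {x} :=
    mul_le_mul_of_nonneg_left hsubadd h1c
  have hsub2' := aux17_sub2 f hsub R (B \ R)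
  have hRB : R ∪ (B \ R) = R ∪ B := Finset.union_sdiff_self_eq_union
  rw [hRB] at hsub2'
  have hcurv' := hcurv B (R \ B) Finset.disjoint_sdiff
  have hBU : B ∪ (R \ B) = R ∪ B := by
    rw [Finset.union_sdiff_self_eq_union, Finset.union_comm]
  rw [hBU] at hcurv'
  have hsplit := hsub (R \ B) (R ∩ B)
  have hsU : (R \ B) ∪ (R ∩ B) = R := by
    ext z
    simp only [Finset.mem_union, Finset.mem_sdiff, Finset.mem_inter]
    tauto
  have hsI : (R \ B) ∩ (R ∩ B) = ∅ := by
    ext z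
    simp only [Finset.mem_inter, Finset.mem_sdiff, Finset.notMem_empty, iff_false, not_and]
    tauto
  rw [hsU, hsI, hnorm] at hsplit
  have hm2 : (1 - c) * f R ≤ (1 - c) * f (R \ B) + (1 - c) * f (R ∩ B) := by
    nlinarith
  have hexp : (1 - c) * f R = f R - c * f R := by ring
  linarith

lemma aux17_mcoef_eval (c : ℝ) (n k : ℕ) (hk : k ≤ n) :
    mcoef c (n : ℤ) (k : ℤ)
      = ∫ p in (0:ℝ)..1, (c * Real.exp (c * p) / (Real.exp c - 1)) * p ^ k * (1 - p) ^ (n - k) := by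
  unfold mcoef
  rw [if_neg (by push_neg; exact ⟨Int.natCast_nonneg n, Int.natCast_nonneg k⟩)]
  have e1 : ((k : ℤ)).toNat = k := Int.toNat_natCast k
  have e2 : ((n : ℤ) - (k : ℤ)).toNat = n - k := by
    rw [← Nat.cast_sub hk, Int.toNat_natCast]
  rw [e1, e2]

lemma aux17_gfun_insert (c : ℝ) (f : Finset U → ℝ) (s : Finset U) (x : U) (hx : x ∉ s) :
    gfun c f (insert x s)
      = ∑ T ∈ s.powerset, mcoef c (s.card : ℤ) ((T.card : ℤ) - 1) * f T
      + ∑ T ∈ s.powerset, mcoef c (s.card : ℤ) (T.card : ℤ) * f (insert x T) := by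
  unfold gfun
  rw [Finset.sum_powerset_insert hx]
  have hcs : (((insert x s).card : ℤ)) - 1 = (s.card : ℤ) := by
    rw [Finset.card_insert_of_notMem hx]; push_cast; ring
  congr 1
  · apply Finset.sum_congr rfl
    intro T hT
    rw [hcs]
  · apply Finset.sum_congr rfl
    intro T hT
    have hxT : x ∉ T := fun h => hx ((Finset.mem_powerset.mp hT) h)
    rw [hcs, Finset.card_insert_of_notMem hxT]
    have : ((T.card + 1 : ℕ) : ℤ) - 1 = (T.card : ℤ) := by push_cast; ring
    rw [this]

lemma aux17_gdiff (c : ℝ) (f : Finset U → ℝ) (r : ℕ) (hr : 0 < r)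
    (A : Finset U) (hcard : A.card = r) (x y : U) (hxA : x ∈ A)
    (hy : y ∈ A → y = x) :
    gfun c f A - gfun c f (insert y (A.erase x))
      = ∑ T ∈ (A.erase x).powerset, mcoef c ((r:ℤ) - 1) (T.card : ℤ)
          * (f (insert x T) - f (insert y T)) := by
  by_cases hyA : y ∈ A
  · have hyx : y = x := hy hyA
    subst hyx
    rw [Finset.insert_erase hxA, sub_self]
    symm
    apply Finset.sum_eq_zero
    intro T hT
    rw [sub_self, mul_zero]
  · have hxe : x ∉ A.erase x := Finset.notMem_erase x A
    have hye : y ∉ A.erase x := fun h => hyA (Finset.mem_of_mem_erase h)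
    have hins : insert x (A.erase x) = A := Finset.insert_erase hxA
    have hcast : (((A.erase x).card : ℤ)) = (r:ℤ) - 1 := by
      rw [Finset.card_erase_of_mem hxA, hcard, Nat.cast_sub hr]
      norm_num
    have hre : ∀ (u v w : ℝ), u + v - (u + w) = v - w := fun u v w => by ring
    calc gfun c f A - gfun c f (insert y (A.erase x))
        = gfun c f (insert x (A.erase x)) - gfun c f (insert y (A.erase x)) := by rw [hins]
      _ = _ := by
          rw [aux17_gfun_insert c f _ x hxe, aux17_gfun_insert c f _ y hye, hcast, hre,
            ← Finset.sum_sub_distrib]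
          apply Finset.sum_congr rfl
          intro T hT
          ring

lemma aux17_count_mem (r : ℕ) (a : Fin r → U) (hainj : Function.Injective a)
    (A : Finset U) (hA : A = Finset.image a Finset.univ) (S : Finset U) (hS : S ⊆ A) :
    (Finset.univ.filter (fun i => a i ∈ S)).card = S.card := by
  have himg : Finset.image a (Finset.univ.filter (fun i => a i ∈ S)) = S := by
    ext z
    constructor
    · intro hz
      obtain ⟨i, hi, rfl⟩ := Finset.mem_image.mp hz
      exact (Finset.mem_filter.mp hi).2
    · intro hz
      have hzA : z ∈ A := hS hz
      rw [hA] at hzA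
      obtain ⟨i, -, rfl⟩ := Finset.mem_image.mp hzA
      exact Finset.mem_image_of_mem a (Finset.mem_filter.mpr ⟨Finset.mem_univ i, hz⟩)
  calc (Finset.univ.filter (fun i => a i ∈ S)).card
      = (Finset.image a (Finset.univ.filter (fun i => a i ∈ S))).card :=
        (Finset.card_image_of_injective _ hainj).symm
    _ = S.card := by rw [himg]

lemma aux17_count_not_mem (r : ℕ) (a : Fin r → U) (hainj : Function.Injective a)
    (A : Finset U) (hA : A = Finset.image a Finset.univ) (S : Finset U) (hS : S ⊆ A) :
    (Finset.univ.filter (fun i => ¬ a i ∈ S)).card = r - S.card := by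
  have h := Finset.card_filter_add_card_filter_not
    (s := (Finset.univ : Finset (Fin r))) (p := fun i => a i ∈ S)
  rw [aux17_count_mem r a hainj A hA S hS, Finset.card_univ, Fintype.card_fin] at h
  omega

end Aux17b

section Aux17c
variable {U : Type*} [DecidableEq U]

lemma aux17_contP (c : ℝ) : Continuous (fun x : ℝ => c * Real.exp (c * x) / (Real.exp c - 1)) := by
  fun_prop

lemma aux17_cont_sum {ι : Type*} (s : Finset ι) (k m : ι → ℕ) (v : ι → ℝ) :
    Continuous (fun x : ℝ => ∑ i ∈ s, x ^ k i * (1 - x) ^ m i * v i) := by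
  apply continuous_finset_sum
  intro i _
  fun_prop

lemma aux17_deriv_id (p : ℝ) (f : Finset U → ℝ) (r : ℕ) (a : Fin r → U)
    (hainj : Function.Injective a) (A : Finset U) (hA : A = Finset.image a Finset.univ)
    (hcard : A.card = r) :
    ∑ i : Fin r, ∑ T ∈ (A.erase (a i)).powerset,
        p ^ T.card * (1 - p) ^ (r - 1 - T.card) * (f (insert (a i) T) - f T)
    = ∑ R ∈ A.powerset, ((R.card : ℝ) * p ^ (R.card - 1) * (1 - p) ^ (r - R.card)
        - ((r - R.card : ℕ) : ℝ) * p ^ R.card * (1 - p) ^ (r - R.card - 1)) * f R := by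
  classical
  have haA : ∀ i : Fin r, a i ∈ A := fun i => hA ▸ Finset.mem_image_of_mem a (Finset.mem_univ i)
  have hstep : ∀ i ∈ (Finset.univ : Finset (Fin r)),
      ∑ T ∈ (A.erase (a i)).powerset,
        p ^ T.card * (1 - p) ^ (r - 1 - T.card) * (f (insert (a i) T) - f T)
      = (∑ S ∈ A.powerset, (if a i ∈ S then p ^ (S.card - 1) * (1 - p) ^ (r - S.card) * f S else 0))
        - (∑ S ∈ A.powerset, (if ¬ a i ∈ S then p ^ S.card * (1 - p) ^ (r - 1 - S.card) * f S else 0)) := by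
    intro i _
    have h0 : ∑ T ∈ (A.erase (a i)).powerset,
        p ^ T.card * (1 - p) ^ (r - 1 - T.card) * (f (insert (a i) T) - f T)
        = (∑ T ∈ (A.erase (a i)).powerset, p ^ T.card * (1 - p) ^ (r - 1 - T.card) * f (insert (a i) T))
          - ∑ T ∈ (A.erase (a i)).powerset, p ^ T.card * (1 - p) ^ (r - 1 - T.card) * f T := by
      rw [← Finset.sum_sub_distrib]
      apply Finset.sum_congr rfl
      intro T hT
      ring
    rw [h0]
    congr 1
    · have h2 := aux17_part1 p f (A.erase (a i)) (a i) (Finset.notMem_erase _ _)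
      rw [Finset.insert_erase (haA i), Finset.card_erase_of_mem (haA i), hcard] at h2
      have e1 : r - 1 + 1 = r := by have := i.pos; omega
      rw [e1] at h2
      exact h2.symm
    · rw [aux17_powerset_erase, Finset.sum_filter]
  calc ∑ i : Fin r, ∑ T ∈ (A.erase (a i)).powerset,
        p ^ T.card * (1 - p) ^ (r - 1 - T.card) * (f (insert (a i) T) - f T)
      = ∑ i : Fin r,
        ((∑ S ∈ A.powerset, (if a i ∈ S then p ^ (S.card - 1) * (1 - p) ^ (r - S.card) * f S else 0))
        - (∑ S ∈ A.powerset, (if ¬ a i ∈ S then p ^ S.card * (1 - p) ^ (r - 1 - S.card) * f S else 0))) :=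
        Finset.sum_congr rfl hstep
    _ = (∑ i : Fin r, ∑ S ∈ A.powerset, (if a i ∈ S then p ^ (S.card - 1) * (1 - p) ^ (r - S.card) * f S else 0))
        - ∑ i : Fin r, ∑ S ∈ A.powerset, (if ¬ a i ∈ S then p ^ S.card * (1 - p) ^ (r - 1 - S.card) * f S else 0) :=
        Finset.sum_sub_distrib _ _
    _ = (∑ S ∈ A.powerset, ∑ i : Fin r, (if a i ∈ S then p ^ (S.card - 1) * (1 - p) ^ (r - S.card) * f S else 0))
        - ∑ S ∈ A.powerset, ∑ i : Fin r, (if ¬ a i ∈ S then p ^ S.card * (1 - p) ^ (r - 1 - S.card) * f S else 0) := by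
        congr 1 <;> exact Finset.sum_comm
    _ = _ := by
        rw [← Finset.sum_sub_distrib]
        apply Finset.sum_congr rfl
        intro S hS
        have hSA := Finset.mem_powerset.mp hS
        have h1 : ∑ i : Fin r, (if a i ∈ S then p ^ (S.card - 1) * (1 - p) ^ (r - S.card) * f S else 0)
            = (S.card : ℝ) * (p ^ (S.card - 1) * (1 - p) ^ (r - S.card) * f S) := by
          rw [Finset.sum_ite, Finset.sum_const, Finset.sum_const_zero, add_zero,
            aux17_count_mem r a hainj A hA S hSA, nsmul_eq_mul]
        have h2 : ∑ i : Fin r, (if ¬ a i ∈ S then p ^ S.card * (1 - p) ^ (r - 1 - S.card) * f S else 0)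
            = ((r - S.card : ℕ) : ℝ) * (p ^ S.card * (1 - p) ^ (r - 1 - S.card) * f S) := by
          rw [Finset.sum_ite, Finset.sum_const, Finset.sum_const_zero, add_zero,
            aux17_count_not_mem r a hainj A hA S hSA, nsmul_eq_mul]
        rw [h1, h2, show r - 1 - S.card = r - S.card - 1 from by omega]
        ring
  
end Aux17c

section Aux17d
variable {U : Type*} [DecidableEq U]

lemma aux17_E_one (f : Finset U → ℝ) (A : Finset U) (r : ℕ) (hcard : A.card = r) :
    ∑ R ∈ A.powerset, (1:ℝ) ^ R.card * (1 - 1) ^ (r - R.card) * f R = f A := by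
  rw [Finset.sum_eq_single_of_mem A (Finset.mem_powerset_self A)]
  · rw [hcard, Nat.sub_self, pow_zero, one_pow, one_mul, one_mul]
  · intro R hR hne
    have hlt : R.card < r := by
      rw [← hcard]
      exact Finset.card_lt_card ((Finset.mem_powerset.mp hR).ssubset_of_ne hne)
    rw [show (1 - 1 : ℝ) = 0 from by norm_num,
      zero_pow (show r - R.card ≠ 0 from by omega), mul_zero, zero_mul]

lemma aux17_E_zero (f : Finset U → ℝ) (hnorm : f ∅ = 0) (A : Finset U) (r : ℕ) :
    ∑ R ∈ A.powerset, (0:ℝ) ^ R.card * (1 - 0) ^ (r - R.card) * f R = 0 := by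
  apply Finset.sum_eq_zero
  intro R hR
  by_cases h : R = ∅
  · subst h; simp [hnorm]
  · have hc : R.card ≠ 0 := by simpa [Finset.card_eq_zero] using h
    rw [zero_pow hc, zero_mul, zero_mul]

lemma aux17_pascal' (p : ℝ) (G : Finset U → ℝ) (r : ℕ) (hr : 0 < r) (A : Finset U)
    (hcard : A.card = r) (x : U) (hx : x ∈ A) :
    ∑ T ∈ (A.erase x).powerset, p ^ T.card * (1 - p) ^ (r - 1 - T.card) * G T
    = ∑ R ∈ A.powerset, p ^ R.card * (1 - p) ^ (r - R.card) * G (R.erase x) := by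
  have h := aux17_pascal p G (A.erase x) x (Finset.notMem_erase _ _)
  rw [Finset.insert_erase hx, Finset.card_erase_of_mem hx, hcard] at h
  rw [show r - 1 + 1 = r from by omega] at h
  exact h.symm

lemma aux17_int_P (c : ℝ) (hc0 : 0 < c) :
    ∫ x in (0:ℝ)..1, c * Real.exp (c * x) / (Real.exp c - 1) = 1 := by
  have hD : Real.exp c - 1 > 0 := by
    have h := Real.exp_lt_exp.mpr hc0
    rw [Real.exp_zero] at h
    linarith
  have hF : ∀ x ∈ Set.uIcc (0:ℝ) 1,
      HasDerivAt (fun y => Real.exp (c * y) / (Real.exp c - 1))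
        (c * Real.exp (c * x) / (Real.exp c - 1)) x := by
    intro x _
    have h0 : HasDerivAt (fun y : ℝ => c * y) (c * 1) x := (hasDerivAt_id x).const_mul c
    have h1 := (h0.exp).div_const (Real.exp c - 1)
    exact h1.congr_deriv (by ring)
  rw [intervalIntegral.integral_eq_sub_of_hasDerivAt hF
    ((aux17_contP c).intervalIntegrable 0 1)]
  rw [mul_one, mul_zero, Real.exp_zero, div_sub_div_same]
  exact div_self (ne_of_gt hD)

lemma aux17_pointwise (c : ℝ) (hc1 : c ≤ 1) (f : Finset U → ℝ)
    (hnorm : f ∅ = 0)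
    (hsub : ∀ X Y : Finset U, f X + f Y ≥ f (X ∪ Y) + f (X ∩ Y))
    (hcurv : ∀ X Y : Finset U, Disjoint X Y → f (X ∪ Y) ≥ f X + (1 - c) * f Y)
    (r : ℕ) (hr : 0 < r) (a b : Fin r → U) (hbinj : Function.Injective b)
    (A B : Finset U) (hA : A = Finset.image a Finset.univ) (hB : B = Finset.image b Finset.univ)
    (hfix : ∀ i : Fin r, b i ∈ A → b i = a i) (hcard : A.card = r)
    (p : ℝ) (hp0 : 0 ≤ p) (hp1 : p ≤ 1) :
    f B ≤ c * (∑ R ∈ A.powerset, p ^ R.card * (1 - p) ^ (r - R.card) * f R)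
      + ∑ i : Fin r, ∑ T ∈ (A.erase (a i)).powerset,
          p ^ T.card * (1 - p) ^ (r - 1 - T.card) * (f (insert (b i) T) - f T) := by
  have haA : ∀ i : Fin r, a i ∈ A := fun i => hA ▸ Finset.mem_image_of_mem a (Finset.mem_univ i)
  have hD : ∑ i : Fin r, ∑ T ∈ (A.erase (a i)).powerset,
        p ^ T.card * (1 - p) ^ (r - 1 - T.card) * (f (insert (b i) T) - f T)
      = ∑ R ∈ A.powerset, p ^ R.card * (1 - p) ^ (r - R.card)
          * (∑ i : Fin r, (f (insert (b i) (R.erase (a i))) - f (R.erase (a i)))) := by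
    calc ∑ i : Fin r, ∑ T ∈ (A.erase (a i)).powerset,
          p ^ T.card * (1 - p) ^ (r - 1 - T.card) * (f (insert (b i) T) - f T)
        = ∑ i : Fin r, ∑ R ∈ A.powerset, p ^ R.card * (1 - p) ^ (r - R.card)
            * (f (insert (b i) (R.erase (a i))) - f (R.erase (a i))) :=
          Finset.sum_congr rfl (fun i _ =>
            aux17_pascal' p (fun T => f (insert (b i) T) - f T) r hr A hcard (a i) (haA i))
      _ = ∑ R ∈ A.powerset, ∑ i : Fin r, p ^ R.card * (1 - p) ^ (r - R.card)
            * (f (insert (b i) (R.erase (a i))) - f (R.erase (a i))) := Finset.sum_comm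
      _ = _ := by
          apply Finset.sum_congr rfl
          intro R hR
          rw [Finset.mul_sum]
  rw [hD]
  have hE : c * (∑ R ∈ A.powerset, p ^ R.card * (1 - p) ^ (r - R.card) * f R)
      = ∑ R ∈ A.powerset, p ^ R.card * (1 - p) ^ (r - R.card) * (c * f R) := by
    rw [Finset.mul_sum]
    apply Finset.sum_congr rfl
    intro R hR
    ring
  rw [hE, ← Finset.sum_add_distrib]
  have hone : ∑ R ∈ A.powerset, p ^ R.card * (1 - p) ^ (r - R.card) = 1 := by
    have h := aux17_sum_w_one p A
    rwa [hcard] at h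
  calc f B = (∑ R ∈ A.powerset, p ^ R.card * (1 - p) ^ (r - R.card)) * f B := by
        rw [hone, one_mul]
    _ = ∑ R ∈ A.powerset, p ^ R.card * (1 - p) ^ (r - R.card) * f B :=
        Finset.sum_mul _ _ _
    _ ≤ _ := by
        apply Finset.sum_le_sum
        intro R hR
        have hw : (0:ℝ) ≤ p ^ R.card * (1 - p) ^ (r - R.card) :=
          mul_nonneg (pow_nonneg hp0 _) (pow_nonneg (by linarith) _)
        have hstar := aux17_star c hc1 f hnorm hsub hcurv r a b hbinj A B hB hfix R
          (Finset.mem_powerset.mp hR)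
        calc p ^ R.card * (1 - p) ^ (r - R.card) * f B
            ≤ p ^ R.card * (1 - p) ^ (r - R.card)
              * (c * f R + ∑ i : Fin r, (f (insert (b i) (R.erase (a i))) - f (R.erase (a i)))) :=
              mul_le_mul_of_nonneg_left hstar hw
          _ = _ := by ring

end Aux17d

section Aux17e
variable {U : Type*} [DecidableEq U]

lemma aux17_parts (c : ℝ) (f : Finset U → ℝ) (hnorm : f ∅ = 0) (r : ℕ) (a : Fin r → U)
    (hainj : Function.Injective a) (A : Finset U) (hA : A = Finset.image a Finset.univ)
    (hcard : A.card = r) :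
    ∫ x in (0:ℝ)..1, (c * Real.exp (c * x) / (Real.exp c - 1)) *
        (∑ i : Fin r, ∑ T ∈ (A.erase (a i)).powerset,
          x ^ T.card * (1 - x) ^ (r - 1 - T.card) * (f (insert (a i) T) - f T))
    = c * Real.exp c / (Real.exp c - 1) * f A
      - c * ∫ x in (0:ℝ)..1, (c * Real.exp (c * x) / (Real.exp c - 1)) *
          (∑ R ∈ A.powerset, x ^ R.card * (1 - x) ^ (r - R.card) * f R) := by
  have hPd : ∀ x : ℝ, HasDerivAt (fun y => c * Real.exp (c * y) / (Real.exp c - 1))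
      (c * (c * Real.exp (c * x) / (Real.exp c - 1))) x := by
    intro x
    have h0 : HasDerivAt (fun y : ℝ => c * y) (c * 1) x := (hasDerivAt_id x).const_mul c
    have h2 := (h0.exp.const_mul c).div_const (Real.exp c - 1)
    exact h2.congr_deriv (by ring)
  have hEd : ∀ x : ℝ, HasDerivAt
      (fun y => ∑ R ∈ A.powerset, y ^ R.card * (1 - y) ^ (r - R.card) * f R)
      (∑ i : Fin r, ∑ T ∈ (A.erase (a i)).powerset,
        x ^ T.card * (1 - x) ^ (r - 1 - T.card) * (f (insert (a i) T) - f T)) x := by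
    intro x
    rw [aux17_deriv_id x f r a hainj A hA hcard]
    apply HasDerivAt.fun_sum
    intro R hR
    have ha : HasDerivAt (fun y : ℝ => y ^ R.card) ((R.card : ℝ) * x ^ (R.card - 1)) x :=
      hasDerivAt_pow R.card x
    have hb0 := (hasDerivAt_pow (r - R.card) (1 - x)).comp x
      ((hasDerivAt_const x (1:ℝ)).sub (hasDerivAt_id x))
    have hb : HasDerivAt (fun y : ℝ => (1 - y) ^ (r - R.card))
        (-(((r - R.card : ℕ) : ℝ) * (1 - x) ^ (r - R.card - 1))) x := by
      exact hb0.congr_deriv (by ring)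
    have hprod := (ha.mul hb).mul_const (f R)
    exact hprod.congr_deriv (by ring)
  have hint1 : IntervalIntegrable (fun x => c * (c * Real.exp (c * x) / (Real.exp c - 1)))
      MeasureTheory.volume 0 1 :=
    (continuous_const.mul (aux17_contP c)).intervalIntegrable 0 1
  have hint2 : IntervalIntegrable (fun x => ∑ i : Fin r, ∑ T ∈ (A.erase (a i)).powerset,
      x ^ T.card * (1 - x) ^ (r - 1 - T.card) * (f (insert (a i) T) - f T))
      MeasureTheory.volume 0 1 := by
    apply Continuous.intervalIntegrable
    apply continuous_finset_sum
    intro i _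
    exact aux17_cont_sum _ _ _ _
  have h := intervalIntegral.integral_mul_deriv_eq_deriv_mul
    (fun x _ => hPd x) (fun x _ => hEd x) hint1 hint2
  rw [h]
  have hE1 : ∑ R ∈ A.powerset, (1:ℝ) ^ R.card * (1 - 1) ^ (r - R.card) * f R = f A :=
    aux17_E_one f A r hcard
  have hE0 : ∑ R ∈ A.powerset, (0:ℝ) ^ R.card * (1 - 0) ^ (r - R.card) * f R = 0 :=
    aux17_E_zero f hnorm A r
  rw [hE1, hE0, mul_zero, sub_zero, mul_one]
  congr 1
  rw [← intervalIntegral.integral_const_mul]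
  apply intervalIntegral.integral_congr
  intro x _
  ring

end Aux17e

section Aux17f
variable {U : Type*} [DecidableEq U]

lemma aux17_sum_gdiff (c : ℝ) (f : Finset U → ℝ) (r : ℕ) (hr : 0 < r)
    (a b : Fin r → U) (A : Finset U) (hcard : A.card = r)
    (haA : ∀ i : Fin r, a i ∈ A) (hfix : ∀ i : Fin r, b i ∈ A → b i = a i) :
    ∑ i : Fin r, (gfun c f A - gfun c f (insert (b i) (A.erase (a i))))
    = ∫ x in (0:ℝ)..1, (c * Real.exp (c * x) / (Real.exp c - 1)) *
        ((∑ i : Fin r, ∑ T ∈ (A.erase (a i)).powerset,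
            x ^ T.card * (1 - x) ^ (r - 1 - T.card) * (f (insert (a i) T) - f T))
         - (∑ i : Fin r, ∑ T ∈ (A.erase (a i)).powerset,
            x ^ T.card * (1 - x) ^ (r - 1 - T.card) * (f (insert (b i) T) - f T))) := by
  have hstep : ∀ i ∈ (Finset.univ : Finset (Fin r)),
      gfun c f A - gfun c f (insert (b i) (A.erase (a i)))
      = ∫ x in (0:ℝ)..1, (c * Real.exp (c * x) / (Real.exp c - 1)) *
          (∑ T ∈ (A.erase (a i)).powerset,
            x ^ T.card * (1 - x) ^ (r - 1 - T.card) * (f (insert (a i) T) - f (insert (b i) T))) := by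
    intro i _
    rw [aux17_gdiff c f r hr A hcard (a i) (b i) (haA i) (hfix i)]
    rw [show ((r:ℤ) - 1) = ((r - 1 : ℕ) : ℤ) from by omega]
    have hpt : ∀ T ∈ (A.erase (a i)).powerset,
        mcoef c ((r - 1 : ℕ) : ℤ) (T.card : ℤ) * (f (insert (a i) T) - f (insert (b i) T))
        = ∫ x in (0:ℝ)..1, ((c * Real.exp (c * x) / (Real.exp c - 1)) * x ^ T.card
            * (1 - x) ^ (r - 1 - T.card)) * (f (insert (a i) T) - f (insert (b i) T)) := by
      intro T hT
      have hk : T.card ≤ r - 1 := by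
        have h := Finset.card_le_card (Finset.mem_powerset.mp hT)
        rw [Finset.card_erase_of_mem (haA i), hcard] at h
        exact h
      rw [aux17_mcoef_eval c (r - 1) T.card hk]
      exact (intervalIntegral.integral_mul_const _ _).symm
    rw [Finset.sum_congr rfl hpt,
      ← intervalIntegral.integral_finset_sum
        (fun T _ => (by fun_prop : Continuous (fun x => ((c * Real.exp (c * x) / (Real.exp c - 1))
          * x ^ T.card * (1 - x) ^ (r - 1 - T.card))
          * (f (insert (a i) T) - f (insert (b i) T)))).intervalIntegrable 0 1)]
    apply intervalIntegral.integral_congr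
    intro x _
    beta_reduce
    rw [Finset.mul_sum]
    apply Finset.sum_congr rfl
    intro T _
    ring
  rw [Finset.sum_congr rfl hstep,
    ← intervalIntegral.integral_finset_sum
      (fun i _ => ((aux17_contP c).fun_mul (aux17_cont_sum _ _ _ _)).intervalIntegrable 0 1)]
  apply intervalIntegral.integral_congr
  intro x _
  beta_reduce
  rw [← Finset.sum_sub_distrib, Finset.mul_sum]
  apply Finset.sum_congr rfl
  intro i _
  rw [← Finset.sum_sub_distrib, Finset.mul_sum, Finset.mul_sum]
  apply Finset.sum_congr rfl
  intro T _
  ring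

lemma aux17_lowerint (c : ℝ) (hc0 : 0 < c) (hc1 : c ≤ 1) (f : Finset U → ℝ)
    (hnorm : f ∅ = 0)
    (hsub : ∀ X Y : Finset U, f X + f Y ≥ f (X ∪ Y) + f (X ∩ Y))
    (hcurv : ∀ X Y : Finset U, Disjoint X Y → f (X ∪ Y) ≥ f X + (1 - c) * f Y)
    (r : ℕ) (hr : 0 < r) (a b : Fin r → U) (hbinj : Function.Injective b)
    (A B : Finset U) (hA : A = Finset.image a Finset.univ) (hB : B = Finset.image b Finset.univ)
    (hfix : ∀ i : Fin r, b i ∈ A → b i = a i) (hcard : A.card = r) :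
    f B ≤ c * (∫ x in (0:ℝ)..1, (c * Real.exp (c * x) / (Real.exp c - 1)) *
          (∑ R ∈ A.powerset, x ^ R.card * (1 - x) ^ (r - R.card) * f R))
      + ∫ x in (0:ℝ)..1, (c * Real.exp (c * x) / (Real.exp c - 1)) *
          (∑ i : Fin r, ∑ T ∈ (A.erase (a i)).powerset,
            x ^ T.card * (1 - x) ^ (r - 1 - T.card) * (f (insert (b i) T) - f T)) := by
  have hD : Real.exp c - 1 > 0 := by
    have h := Real.exp_lt_exp.mpr hc0
    rw [Real.exp_zero] at h
    linarith
  have hcontD : Continuous (fun x : ℝ => ∑ i : Fin r, ∑ T ∈ (A.erase (a i)).powerset,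
      x ^ T.card * (1 - x) ^ (r - 1 - T.card) * (f (insert (b i) T) - f T)) :=
    continuous_finset_sum _ (fun i _ => aux17_cont_sum _ _ _ _)
  have hcontE : Continuous (fun x : ℝ =>
      ∑ R ∈ A.powerset, x ^ R.card * (1 - x) ^ (r - R.card) * f R) :=
    aux17_cont_sum _ _ _ _
  have h1 : f B = ∫ x in (0:ℝ)..1, (c * Real.exp (c * x) / (Real.exp c - 1)) * f B := by
    rw [intervalIntegral.integral_mul_const, aux17_int_P c hc0, one_mul]
  rw [h1, ← intervalIntegral.integral_const_mul,
    ← intervalIntegral.integral_add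
      ((continuous_const.fun_mul ((aux17_contP c).fun_mul hcontE)).intervalIntegrable 0 1)
      (((aux17_contP c).fun_mul hcontD).intervalIntegrable 0 1)]
  apply intervalIntegral.integral_mono_on zero_le_one
    (((aux17_contP c).fun_mul continuous_const).intervalIntegrable 0 1)
    ((by fun_prop : Continuous (fun x : ℝ =>
        c * ((c * Real.exp (c * x) / (Real.exp c - 1)) *
          (∑ R ∈ A.powerset, x ^ R.card * (1 - x) ^ (r - R.card) * f R))
        + (c * Real.exp (c * x) / (Real.exp c - 1)) *
          (∑ i : Fin r, ∑ T ∈ (A.erase (a i)).powerset,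
            x ^ T.card * (1 - x) ^ (r - 1 - T.card) * (f (insert (b i) T) - f T)))).intervalIntegrable 0 1)
  intro x hx
  obtain ⟨hx0, hx1⟩ := hx
  have hP : (0:ℝ) ≤ c * Real.exp (c * x) / (Real.exp c - 1) := by positivity
  have hpt := aux17_pointwise c hc1 f hnorm hsub hcurv r hr a b hbinj A B hA hB hfix hcard
    x hx0 hx1
  calc (c * Real.exp (c * x) / (Real.exp c - 1)) * f B
      ≤ (c * Real.exp (c * x) / (Real.exp c - 1)) *
        (c * (∑ R ∈ A.powerset, x ^ R.card * (1 - x) ^ (r - R.card) * f R)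
          + ∑ i : Fin r, ∑ T ∈ (A.erase (a i)).powerset,
            x ^ T.card * (1 - x) ^ (r - 1 - T.card) * (f (insert (b i) T) - f T)) :=
        mul_le_mul_of_nonneg_left hpt hP
    _ = _ := by ring

end Aux17f

theorem stmt_17 (c : ℝ) (hc0 : 0 < c) (hc1 : c ≤ 1) {U : Type*} [DecidableEq U]
    (M : Matroid U)
    (f : Finset U → ℝ)
    (hnorm : f ∅ = 0)
    (hmono : ∀ A B : Finset U, A ⊆ B → f A ≤ f B)
    (hsub : ∀ A B : Finset U, f A + f B ≥ f (A ∪ B) + f (A ∩ B))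
    (hcurv : ∀ X Y : Finset U, Disjoint X Y → f (X ∪ Y) ≥ f X + (1 - c) * f Y)
    (r : ℕ) (a b : Fin r → U)
    (hainj : Function.Injective a) (hbinj : Function.Injective b)
    (A B : Finset U)
    (hA : A = Finset.image a Finset.univ) (hB : B = Finset.image b Finset.univ)
    (hAbase : M.IsBase (A : Set U)) (hBbase : M.IsBase (B : Set U))
    (hswap : ∀ i : Fin r, M.IsBase ((insert (b i) (A.erase (a i)) : Finset U) : Set U))
    (hfix : ∀ i : Fin r, b i ∈ A → b i = a i) :
    c * Real.exp c / (Real.exp c - 1) * f A ≥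
      f B + ∑ i : Fin r, (gfun c f A - gfun c f (insert (b i) (A.erase (a i)))) := by
  classical
  rcases Nat.eq_zero_or_pos r with hr0 | hr
  · subst hr0
    have hAe : A = ∅ := by simpa using hA
    have hBe : B = ∅ := by simpa using hB
    simp [hAe, hBe, hnorm]
  · have hcard : A.card = r := by
      rw [hA, Finset.card_image_of_injective _ hainj, Finset.card_univ, Fintype.card_fin]
    have haA : ∀ i : Fin r, a i ∈ A := fun i => hA ▸ Finset.mem_image_of_mem a (Finset.mem_univ i)
    rw [ge_iff_le, aux17_sum_gdiff c f r hr a b A hcard haA hfix]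
    have hcontG : Continuous (fun x : ℝ => ∑ i : Fin r, ∑ T ∈ (A.erase (a i)).powerset,
        x ^ T.card * (1 - x) ^ (r - 1 - T.card) * (f (insert (a i) T) - f T)) :=
      continuous_finset_sum _ (fun i _ => aux17_cont_sum _ _ _ _)
    have hcontD : Continuous (fun x : ℝ => ∑ i : Fin r, ∑ T ∈ (A.erase (a i)).powerset,
        x ^ T.card * (1 - x) ^ (r - 1 - T.card) * (f (insert (b i) T) - f T)) :=
      continuous_finset_sum _ (fun i _ => aux17_cont_sum _ _ _ _)
    have hsplit : (∫ x in (0:ℝ)..1, (c * Real.exp (c * x) / (Real.exp c - 1)) *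
          ((∑ i : Fin r, ∑ T ∈ (A.erase (a i)).powerset,
              x ^ T.card * (1 - x) ^ (r - 1 - T.card) * (f (insert (a i) T) - f T))
           - (∑ i : Fin r, ∑ T ∈ (A.erase (a i)).powerset,
              x ^ T.card * (1 - x) ^ (r - 1 - T.card) * (f (insert (b i) T) - f T))))
        = (∫ x in (0:ℝ)..1, (c * Real.exp (c * x) / (Real.exp c - 1)) *
            (∑ i : Fin r, ∑ T ∈ (A.erase (a i)).powerset,
              x ^ T.card * (1 - x) ^ (r - 1 - T.card) * (f (insert (a i) T) - f T)))
          - ∫ x in (0:ℝ)..1, (c * Real.exp (c * x) / (Real.exp c - 1)) *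
            (∑ i : Fin r, ∑ T ∈ (A.erase (a i)).powerset,
              x ^ T.card * (1 - x) ^ (r - 1 - T.card) * (f (insert (b i) T) - f T)) := by
      rw [← intervalIntegral.integral_sub (((aux17_contP c).fun_mul hcontG).intervalIntegrable 0 1)
        (((aux17_contP c).fun_mul hcontD).intervalIntegrable 0 1)]
      apply intervalIntegral.integral_congr
      intro x _
      beta_reduce
      ring
    rw [hsplit, aux17_parts c f hnorm r a hainj A hA hcard]
    have hlow := aux17_lowerint c hc0 hc1 f hnorm hsub hcurv r hr a b hbinj A B hA hB hfix hcard
    linarith
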